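/- Let Q : ℝ → ℝ be C¹, positive, with Q(y) = κ₀/y² + O(1/y⁴) as |y| → ∞ for some κ₀ > 0. Fix i ≠ j and real x_i, x_j with x_{ij} := x_i - x_j satisfying |x_{ij}| ≥ 2. Then for all y with |y - x_i| ≤ |x_{ij}|/3, one has |Q(y - x_j) - κ₀/x_{ij}² + 2κ₀ (y - x_i)/x_{ij}³| ≤ C (1 + (y - x_i)²)/|x_{ij}|⁴, with C depending only on Q. -/

import Mathlib

set_option maxHeartbeats 1000000 in
theorem stmt18 (Q Q' : ℝ → ℝ) (κ₀ C₁ R : ℝ) (hκ : 0 < κ₀)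
    (hQ : ∀ y, HasDerivAt Q (Q' y) y) (hQpos : ∀ y, 0 < Q y)
    (htail : ∀ y : ℝ, R ≤ |y| → |Q y - κ₀ / y ^ 2| ≤ C₁ / y ^ 4) :
    ∃ C > 0, ∀ xi xj : ℝ, 2 ≤ |xi - xj| → ∀ y : ℝ, |y - xi| ≤ |xi - xj| / 3 →
      |Q (y - xj) - κ₀ / (xi - xj) ^ 2 + 2 * κ₀ * (y - xi) / (xi - xj) ^ 3|
        ≤ C * (1 + (y - xi) ^ 2) / |xi - xj| ^ 4 := by
  have hQc : Continuous Q := by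
    have : Differentiable ℝ Q := fun y => (hQ y).differentiableAt
    exact this.continuous
  -- C₁ is nonnegative
  have hC₁ : 0 ≤ C₁ := by
    have hy : R ≤ |(|R| + 1)| := by
      rw [abs_of_nonneg (by positivity)]
      have := le_abs_self R; linarith
    have h := htail (|R| + 1) hy
    have h2 : (0:ℝ) < (|R| + 1) ^ 4 := by positivity
    have h3 : (0:ℝ) ≤ |Q (|R| + 1) - κ₀ / (|R| + 1) ^ 2| := abs_nonneg _
    have h4 : (0:ℝ) ≤ C₁ / (|R| + 1) ^ 4 := le_trans h3 h
    exact nonneg_of_mul_nonneg_right (by rw [div_eq_mul_inv] at h4; linarith [h4]) (by positivity : (0:ℝ) < ((|R|+1)^4)⁻¹)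
  set K : ℝ := max 2 (3 * R / 2) with hKdef
  have hK2 : (2:ℝ) ≤ K := le_max_left _ _
  have hKR : 3 * R / 2 ≤ K := le_max_right _ _
  have hK0 : (0:ℝ) < K := by linarith
  -- bound for Q on a compact set
  obtain ⟨M, hM⟩ := (isCompact_Icc : IsCompact (Set.Icc (-(4 * K / 3)) (4 * K / 3))).exists_bound_of_continuousOn hQc.continuousOn
  have hM0 : 0 ≤ M := le_trans (norm_nonneg _) (hM 0 (by constructor <;> [linarith; linarith]))
  refine ⟨6 * C₁ + 9 * κ₀ + (M + κ₀) * K ^ 4 + 1, by positivity, ?_⟩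
  suffices main : ∀ x u : ℝ, 2 ≤ |x| → |u| ≤ |x| / 3 →
      |Q (x + u) - κ₀ / x ^ 2 + 2 * κ₀ * u / x ^ 3|
        ≤ (6 * C₁ + 9 * κ₀ + (M + κ₀) * K ^ 4 + 1) * (1 + u ^ 2) / |x| ^ 4 by
    intro xi xj hxij y hyi
    have hyz : y - xj = (xi - xj) + (y - xi) := by ring
    rw [hyz]
    exact main (xi - xj) (y - xi) hxij hyi
  intro x u hxa hua
  have hx0 : x ≠ 0 := by intro h; rw [h, abs_zero] at hxa; linarith
  have hxabs : 0 < |x| := by linarith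
  have hx4 : |x| ^ 4 = x ^ 4 := by
    rw [← abs_pow]; exact abs_of_nonneg (by positivity)
  have hx2 : |x| ^ 2 = x ^ 2 := by
    rw [← abs_pow]; exact abs_of_nonneg (by positivity)
  have hzl : 2 * |x| / 3 ≤ |x + u| := by
    have h1 : |x| ≤ |x + u| + |u| := by
      have := abs_add_le (x + u) (-u)
      simpa using this
    linarith [abs_nonneg u]
  have hzu : |x + u| ≤ 4 * |x| / 3 := by
    have := abs_add_le x u
    linarith
  have hz0 : x + u ≠ 0 := by
    intro h; rw [h, abs_zero] at hzl; linarith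
  have hz2 : |x + u| ^ 2 = (x + u) ^ 2 := by
    rw [← abs_pow]; exact abs_of_nonneg (by positivity)
  have hz4 : |x + u| ^ 4 = (x + u) ^ 4 := by
    rw [← abs_pow]; exact abs_of_nonneg (by positivity)
  have hx4pos : (0:ℝ) < |x| ^ 4 := by positivity
  by_cases hcase : R ≤ 2 * |x| / 3
  · -- far case: use the tail estimate
    have h1 : |Q (x + u) - κ₀ / (x + u) ^ 2| ≤ C₁ / (x + u) ^ 4 :=
      htail (x + u) (le_trans hcase hzl)
    have key : Q (x + u) - κ₀ / x ^ 2 + 2 * κ₀ * u / x ^ 3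
        = (Q (x + u) - κ₀ / (x + u) ^ 2) + κ₀ * (u ^ 2 * (3 * x + 2 * u)) / (x ^ 3 * (x + u) ^ 2) := by
      field_simp
      ring
    rw [key]
    have h1' : C₁ / (x + u) ^ 4 ≤ 6 * C₁ / |x| ^ 4 := by
      have hp : (2 * |x| / 3) ^ 4 ≤ |x + u| ^ 4 := by
        apply pow_le_pow_left₀ (by positivity) hzl
      rw [hz4] at hp
      rw [div_le_div_iff₀ (by positivity) hx4pos]
      nlinarith [mul_le_mul_of_nonneg_left hp hC₁, mul_nonneg hC₁ hx4pos.le]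
    have h2 : |κ₀ * (u ^ 2 * (3 * x + 2 * u)) / (x ^ 3 * (x + u) ^ 2)| ≤ 9 * κ₀ * u ^ 2 / |x| ^ 4 := by
      rw [abs_div, abs_mul]
      have hden : |x ^ 3 * (x + u) ^ 2| = |x| ^ 3 * (x + u) ^ 2 := by
        rw [abs_mul, abs_pow, abs_pow, hz2]
      rw [hden]
      have hnum : |u ^ 2 * (3 * x + 2 * u)| = u ^ 2 * |3 * x + 2 * u| := by
        rw [abs_mul, abs_pow, sq_abs]
      rw [hnum, abs_of_pos hκ]
      have h3x : |3 * x + 2 * u| ≤ 11 * |x| / 3 := by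
        have := abs_add_le (3 * x) (2 * u)
        rw [abs_mul, abs_mul] at this
        simp only [abs_two, abs_of_pos (by norm_num : (0:ℝ) < 3)] at this
        linarith [this]
      have hzsq : 4 * |x| ^ 2 / 9 ≤ (x + u) ^ 2 := by
        have hp : (2 * |x| / 3) ^ 2 ≤ |x + u| ^ 2 := by
          apply pow_le_pow_left₀ (by positivity) hzl
        rw [hz2] at hp; nlinarith
      rw [div_le_div_iff₀ (by positivity) hx4pos]
      have hc1 : (0:ℝ) ≤ κ₀ * u ^ 2 * |x| ^ 4 := by positivity
      have hc2 : (0:ℝ) ≤ 9 * κ₀ * u ^ 2 * |x| ^ 3 := by positivity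
      nlinarith [mul_le_mul_of_nonneg_right h3x hc1,
        mul_le_mul_of_nonneg_right hzsq hc2, mul_nonneg hc1 (abs_nonneg x)]
    calc |(Q (x + u) - κ₀ / (x + u) ^ 2) + κ₀ * (u ^ 2 * (3 * x + 2 * u)) / (x ^ 3 * (x + u) ^ 2)|
        ≤ |Q (x + u) - κ₀ / (x + u) ^ 2| + |κ₀ * (u ^ 2 * (3 * x + 2 * u)) / (x ^ 3 * (x + u) ^ 2)| :=
          abs_add_le _ _
      _ ≤ 6 * C₁ / |x| ^ 4 + 9 * κ₀ * u ^ 2 / |x| ^ 4 := add_le_add (le_trans h1 h1') h2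
      _ ≤ (6 * C₁ + 9 * κ₀ + (M + κ₀) * K ^ 4 + 1) * (1 + u ^ 2) / |x| ^ 4 := by
          rw [← add_div, div_le_div_iff₀ hx4pos hx4pos]
          have h6 : 0 ≤ (M + κ₀) * K ^ 4 := by positivity
          nlinarith [sq_nonneg u, hx4pos, mul_pos hx4pos hx4pos, hC₁, hκ.le,
            mul_nonneg (mul_nonneg hC₁ (sq_nonneg u)) hx4pos.le,
            mul_nonneg h6 hx4pos.le, mul_nonneg (mul_nonneg h6 (sq_nonneg u)) hx4pos.le,
            mul_nonneg hκ.le hx4pos.le]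
  · -- near case: use the compact bound
    push_neg at hcase
    have hxK : |x| ≤ K := by linarith
    have hzK : |x + u| ≤ 4 * K / 3 := by
      calc |x + u| ≤ 4 * |x| / 3 := hzu
        _ ≤ 4 * K / 3 := by linarith
    have hmem : x + u ∈ Set.Icc (-(4 * K / 3)) (4 * K / 3) := by
      rw [Set.mem_Icc]
      constructor
      · linarith [neg_abs_le (x + u)]
      · linarith [le_abs_self (x + u)]
    have hQb : |Q (x + u)| ≤ M := by
      have := hM (x + u) hmem
      rwa [Real.norm_eq_abs] at this
    have hx2ge : (4:ℝ) ≤ x ^ 2 := by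
      rw [← hx2]; nlinarith
    have hx3 : |x| ^ 3 = |x ^ 3| := (abs_pow x 3).symm
    have lhsb : |Q (x + u) - κ₀ / x ^ 2 + 2 * κ₀ * u / x ^ 3| ≤ M + κ₀ := by
      have t1 : |κ₀ / x ^ 2| ≤ κ₀ / 4 := by
        rw [abs_div, abs_of_pos hκ, abs_of_nonneg (by positivity : (0:ℝ) ≤ x ^ 2)]
        apply div_le_div_of_nonneg_left hκ.le (by norm_num) hx2ge
      have t2 : |2 * κ₀ * u / x ^ 3| ≤ κ₀ / 6 := by
        rw [abs_div, abs_mul, abs_mul, abs_two, abs_of_pos hκ, abs_pow]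
        rw [div_le_div_iff₀ (by positivity) (by norm_num : (0:ℝ) < 6)]
        have : |x| ^ 3 = |x| ^ 2 * |x| := by ring
        nlinarith [abs_nonneg u, hxabs, hκ.le, mul_le_mul_of_nonneg_left hua (by positivity : (0:ℝ) ≤ 12 * κ₀),
          mul_pos hxabs hxabs, sq_nonneg (|x| - 2), mul_nonneg (mul_nonneg hκ.le (abs_nonneg u)) (sq_nonneg (|x| - 2))]
      calc |Q (x + u) - κ₀ / x ^ 2 + 2 * κ₀ * u / x ^ 3|
          ≤ |Q (x + u) - κ₀ / x ^ 2| + |2 * κ₀ * u / x ^ 3| := abs_add_le _ _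
        _ ≤ |Q (x + u)| + |κ₀ / x ^ 2| + |2 * κ₀ * u / x ^ 3| := by
            linarith [abs_sub (Q (x + u)) (κ₀ / x ^ 2)]
        _ ≤ M + κ₀ / 4 + κ₀ / 6 := by linarith
        _ ≤ M + κ₀ := by linarith
    have rhsb : M + κ₀ ≤ (6 * C₁ + 9 * κ₀ + (M + κ₀) * K ^ 4 + 1) * (1 + u ^ 2) / |x| ^ 4 := by
      rw [le_div_iff₀ hx4pos]
      have hK4 : |x| ^ 4 ≤ K ^ 4 := pow_le_pow_left₀ (abs_nonneg x) hxK 4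
      have hMκ : 0 ≤ M + κ₀ := by linarith
      nlinarith [sq_nonneg u, mul_nonneg hMκ (sq_nonneg u), hC₁, hκ.le,
        mul_le_mul_of_nonneg_left hK4 hMκ,
        mul_nonneg (mul_nonneg hMκ (sq_nonneg u)) (pow_nonneg hK0.le 4),
        mul_nonneg hC₁ hx4pos.le, mul_nonneg hκ.le hx4pos.le, hx4pos.le]
    linarith
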